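/- For each j = 1, 2, ..., k, let G_j be a d_j-regular simple graph on n_j vertices with spectrum σ(G_j) (the multiset of eigenvalues of its adjacency matrix). Let Ĝ be the join of G₁, G₂, ..., G_k, i.e., the graph obtained from the disjoint union of G₁, ..., G_k by connecting each vertex of G_i to every vertex of G_j for all i ≠ j. Let B̂ be the k×k symmetric matrix with diagonal entries d₁, d₂, ..., d_k and (i,j) entry √(n_i n_j) for i ≠ j. Then the spectrum of Ĝ equals the multiset union over j of (σ(G_j) with one copy of d_j removed) together with the spectrum of B̂, and consequently the energy of Ĝ satisfies E(Ĝ) = Σ_{j=1}^{k} (E(G_j) − d_j) + E(B̂). -/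

import Mathlib

open Matrix Polynomial SimpleGraph

section Aux

lemma my_charpoly_similar {ι : Type*} [Fintype ι] [DecidableEq ι]
    (P A : Matrix ι ι ℝ) (h1 : Pᵀ * P = 1) : (Pᵀ * A * P).charpoly = A.charpoly := by
  have h2 : P * Pᵀ = 1 := mul_eq_one_comm.mp h1
  have hP : (C.mapMatrix Pᵀ) * (C.mapMatrix P) = (1 : Matrix ι ι ℝ[X]) := by
    rw [← _root_.map_mul _ _ _, h1, _root_.map_one (C.mapMatrix)]
  have hP' : (C.mapMatrix P) * (C.mapMatrix Pᵀ) = (1 : Matrix ι ι ℝ[X]) := by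
    rw [← _root_.map_mul _ _ _, h2, _root_.map_one (C.mapMatrix)]
  have key : charmatrix (Pᵀ * A * P) = C.mapMatrix Pᵀ * charmatrix A * C.mapMatrix P := by
    rw [charmatrix, charmatrix, Matrix.mul_sub, Matrix.sub_mul,
      _root_.map_mul (C.mapMatrix) _ _, _root_.map_mul (C.mapMatrix) _ _]
    congr 1
    symm
    have hc : Commute (scalar ι (X : ℝ[X])) (C.mapMatrix P) :=
      Matrix.scalar_commute _ (fun r' => Commute.all _ _) _
    calc C.mapMatrix Pᵀ * scalar ι X * C.mapMatrix P
        = C.mapMatrix Pᵀ * (scalar ι X * C.mapMatrix P) := by rw [Matrix.mul_assoc]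
      _ = C.mapMatrix Pᵀ * (C.mapMatrix P * scalar ι X) := by rw [hc.eq]
      _ = (C.mapMatrix Pᵀ * C.mapMatrix P) * scalar ι X := by rw [Matrix.mul_assoc]
      _ = scalar ι X := by rw [hP, Matrix.one_mul]
  rw [Matrix.charpoly, Matrix.charpoly, key, Matrix.det_mul, Matrix.det_mul]
  ring_nf
  rw [mul_comm, ← mul_assoc, ← Matrix.det_mul, hP', Matrix.det_one, one_mul]

def mySigmaEquiv {k : ℕ} (m' : Fin k → Type*) (j : Fin k) :
    m' j ≃ {x : Σ i, m' i // x.fst = j} where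
  toFun a := ⟨⟨j, a⟩, rfl⟩
  invFun x := x.2 ▸ x.1.2
  left_inv a := rfl
  right_inv := by rintro ⟨⟨i, a⟩, rfl⟩; rfl

lemma my_det_blockDiagonal' {k : ℕ} {m' : Fin k → Type*}
    [∀ i, Fintype (m' i)] [∀ i, DecidableEq (m' i)] {R : Type*} [CommRing R]
    (M : ∀ i, Matrix (m' i) (m' i) R) :
    (blockDiagonal' M).det = ∏ j, (M j).det := by
  rw [(blockTriangular_blockDiagonal' M).det_fintype]
  refine Finset.prod_congr rfl fun j _ => ?_
  rw [← det_submatrix_equiv_self (mySigmaEquiv m' j)]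
  congr 1
  ext a b
  simp [toSquareBlock_def, mySigmaEquiv, blockDiagonal'_apply_eq]

lemma my_charmatrix_blockDiagonal' {k : ℕ} {m' : Fin k → Type*}
    [∀ i, Fintype (m' i)] [∀ i, DecidableEq (m' i)] {R : Type*} [CommRing R]
    (M : ∀ i, Matrix (m' i) (m' i) R) :
    charmatrix (blockDiagonal' M) = blockDiagonal' (fun j => charmatrix (M j)) := by
  refine Matrix.ext fun x y => ?_
  obtain ⟨i, a⟩ := x; obtain ⟨j, b⟩ := y
  rcases eq_or_ne i j with rfl | hij
  · rcases eq_or_ne a b with rfl | hab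
    · simp only [charmatrix_apply_eq, blockDiagonal'_apply_eq]
    · have hne : (⟨i, a⟩ : Σ i, m' i) ≠ ⟨i, b⟩ := by simp [hab]
      simp only [charmatrix_apply_ne _ _ _ hne, blockDiagonal'_apply_eq,
        charmatrix_apply_ne _ _ _ hab]
  · have hne : (⟨i, a⟩ : Σ i, m' i) ≠ ⟨j, b⟩ := by simp [hij]
    rw [charmatrix_apply_ne _ _ _ hne, blockDiagonal'_apply_ne _ _ _ hij,
      blockDiagonal'_apply_ne _ _ _ hij, map_zero, neg_zero]

lemma my_charpoly_blockDiagonal' {k : ℕ} {m' : Fin k → Type*}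
    [∀ i, Fintype (m' i)] [∀ i, DecidableEq (m' i)] {R : Type*} [CommRing R]
    (M : ∀ i, Matrix (m' i) (m' i) R) :
    (blockDiagonal' M).charpoly = ∏ j, (M j).charpoly := by
  rw [Matrix.charpoly, my_charmatrix_blockDiagonal', my_det_blockDiagonal']
  rfl

lemma my_exists_P (m : ℕ) (dd : ℕ) (A : Matrix (Fin (m + 1)) (Fin (m + 1)) ℝ)
    (hsymm : Aᵀ = A) (hrow : ∀ r, ∑ s, A r s = dd) :
    ∃ P : Matrix (Fin (m + 1)) (Fin (m + 1)) ℝ,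
      Pᵀ * P = 1 ∧
      (∀ a, ∑ r, P r a = if a = 0 then Real.sqrt (m + 1) else 0) ∧
      (∀ a, (Pᵀ * A * P) a 0 = if a = 0 then (dd : ℝ) else 0) ∧
      (∀ b, (Pᵀ * A * P) 0 b = if b = 0 then (dd : ℝ) else 0) := by
  have hs : (0 : ℝ) < Real.sqrt (m + 1) := Real.sqrt_pos.mpr (by positivity)
  set c : ℝ := (Real.sqrt (m + 1))⁻¹ with hc
  have hcs : c * Real.sqrt (m + 1) = 1 := inv_mul_cancel₀ hs.ne'
  have hsq : Real.sqrt (m+1) * Real.sqrt (m+1) = (m+1:ℝ) :=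
    Real.mul_self_sqrt (by positivity)
  set v : EuclideanSpace ℝ (Fin (m + 1)) := WithLp.toLp 2 (fun _ => c) with hv
  have hcc : ((m : ℝ) + 1) * (c * c) = 1 := by
    rw [hc, ← mul_inv, hsq]
    exact mul_inv_cancel₀ (by positivity)
  have hvnorm : (inner ℝ v v : ℝ) = 1 := by
    simp only [PiLp.inner_apply, RCLike.inner_apply, starRingEnd_apply, star_trivial, hv]
    simp only [Finset.sum_const, Finset.card_univ, Fintype.card_fin, nsmul_eq_mul]
    push_cast
    exact hcc
  have horth : Orthonormal ℝ (({0} : Set (Fin (m + 1))).restrict (fun _ => v)) := by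
    constructor
    · rintro ⟨i, hi⟩
      rw [@norm_eq_sqrt_re_inner ℝ]
      change √(RCLike.re (inner ℝ v v)) = 1
      rw [RCLike.re_to_real, hvnorm, Real.sqrt_one]
    · rintro ⟨i, hi⟩ ⟨j, hj⟩ hij
      exact absurd (Subtype.ext ((Set.eq_of_mem_singleton hi).trans
        (Set.eq_of_mem_singleton hj).symm)) hij
  obtain ⟨b, hb⟩ := horth.exists_orthonormalBasis_extension_of_card_eq
    (by simp [finrank_euclideanSpace])
  have hb0 : b 0 = v := hb 0 rfl
  set P : Matrix (Fin (m + 1)) (Fin (m + 1)) ℝ := Matrix.of fun r cc => b cc r with hP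
  have hinner : ∀ x y : Fin (m+1), (inner ℝ (b x) (b y) : ℝ) = if x = y then 1 else 0 := by
    intro x y
    rcases eq_or_ne x y with rfl | h
    · rw [if_pos rfl, real_inner_self_eq_norm_mul_norm, b.orthonormal.1 x, mul_one]
    · simp [h, b.orthonormal.2 h]
  have hPtP : Pᵀ * P = 1 := by
    ext a cc
    rw [Matrix.mul_apply, Matrix.one_apply]
    have := hinner a cc
    simp only [PiLp.inner_apply, RCLike.inner_apply, starRingEnd_apply, star_trivial] at this
    simpa [hP, Matrix.transpose_apply, mul_comm] using this
  have hcol : ∀ a, ∑ r, P r a = if a = 0 then Real.sqrt (m + 1) else 0 := by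
    intro a
    have := hinner 0 a
    rw [hb0] at this
    simp only [PiLp.inner_apply, RCLike.inner_apply, starRingEnd_apply, star_trivial, hv] at this
    have h2 : c * ∑ r, b a r = if 0 = a then 1 else 0 := by
      rw [Finset.mul_sum]; simpa [mul_comm] using this
    have h3 : ∑ r, P r a = Real.sqrt (m+1) * (c * ∑ r, b a r) := by
      rw [← mul_assoc, mul_comm (Real.sqrt (m+1)) c, hcs, one_mul]; rfl
    rw [h3, h2]
    rcases eq_or_ne a 0 with rfl | h
    · simp
    · simp [h, Ne.symm h]
  refine ⟨P, hPtP, hcol, ?_, ?_⟩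
  · intro a
    have hAP0 : ∀ r, (A * P) r 0 = (dd : ℝ) * c := by
      intro r
      rw [Matrix.mul_apply]
      have : ∀ s, P s 0 = c := fun s => by simp [hP, hb0, hv]
      simp_rw [this, ← Finset.sum_mul, hrow r]
    rw [Matrix.mul_assoc, Matrix.mul_apply]
    simp_rw [hAP0]
    rw [show ∑ r, Pᵀ a r * ((dd:ℝ) * c) = (dd : ℝ) * c * ∑ r, P r a by
      rw [Finset.mul_sum]; exact Finset.sum_congr rfl fun r _ => by
        rw [Matrix.transpose_apply]; ring]
    rw [hcol a]
    rcases eq_or_ne a 0 with rfl | h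
    · simp [mul_assoc, hcs]
    · simp [h]
  · intro bb
    have hPA : ∀ s, (Pᵀ * A) 0 s = c * dd := by
      intro s
      rw [Matrix.mul_apply]
      have hcolA : ∑ r, A r s = dd := by
        rw [show (∑ r, A r s) = ∑ r, Aᵀ s r from rfl]
        rw [hsymm]; exact hrow s
      have : ∀ r, Pᵀ 0 r = c := fun r => by simp [hP, hb0, hv]
      simp_rw [this, ← Finset.mul_sum, hcolA]
    rw [Matrix.mul_apply]
    simp_rw [hPA]
    rw [show ∑ s, c * (dd:ℝ) * P s bb = c * dd * ∑ s, P s bb from Finset.mul_sum _ _ _ |>.symm]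
    rw [hcol bb]
    rcases eq_or_ne bb 0 with rfl | h
    · simp; rw [mul_comm c, mul_assoc, hcs, mul_one]
    · simp [h]

def myFinOneSum (m : ℕ) : Fin (m + 1) ≃ (Fin 1 ⊕ Fin m) where
  toFun := fun a => Fin.cases (Sum.inl 0) (fun a' => Sum.inr a') a
  invFun := Sum.elim (fun _ => (0 : Fin (m + 1))) Fin.succ
  left_inv := by
    intro a
    induction a using Fin.cases <;> simp
  right_inv := by
    rintro (a | a)
    · simp [Fin.fin_one_eq_zero a]
    · simp

lemma my_charpoly_block (m : ℕ) (dd : ℝ) (M : Matrix (Fin (m + 1)) (Fin (m + 1)) ℝ)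
    (h1 : ∀ a, M a 0 = if a = 0 then dd else 0)
    (h2 : ∀ b, M 0 b = if b = 0 then dd else 0) :
    M.charpoly = (X - C dd) * (M.submatrix Fin.succ Fin.succ).charpoly := by
  rw [← Matrix.charpoly_reindex (myFinOneSum m)]
  have hre : (reindex (myFinOneSum m) (myFinOneSum m)) M =
      fromBlocks (Matrix.of fun _ _ => dd) 0 0 (M.submatrix Fin.succ Fin.succ) := by
    refine Matrix.ext fun x y => ?_
    rcases x with i | a <;> rcases y with j | b
    · show M _ _ = _
      simpa [myFinOneSum] using h1 0
    · show M _ _ = _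
      simpa [myFinOneSum, Fin.succ_ne_zero b] using h2 b.succ
    · show M _ _ = _
      simpa [myFinOneSum, Fin.succ_ne_zero a] using h1 a.succ
    · rfl
  rw [hre, Matrix.charpoly_fromBlocks_zero₂₁]
  congr 1
  rw [Matrix.charpoly, Matrix.det_fin_one, charmatrix_apply_eq]
  rfl

def myGlobalEquiv (k : ℕ) (n : Fin k → ℕ) :
    ((j : Fin k) × Fin (n j + 1)) ≃ (Fin k ⊕ (j : Fin k) × Fin (n j)) where
  toFun x := Fin.cases (Sum.inl x.1) (fun a => Sum.inr ⟨x.1, a⟩) x.2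
  invFun := Sum.elim (fun j => ⟨j, 0⟩) (fun x => ⟨x.1, x.2.succ⟩)
  left_inv := by
    rintro ⟨j, a⟩
    induction a using Fin.cases <;> simp
  right_inv := by
    rintro (j | ⟨j, a⟩) <;> simp

lemma my_conj_entry {ι : Type*} [Fintype ι] (P B : Matrix ι ι ℝ) (a b : ι) :
    (Pᵀ * B * P) a b = ∑ s, ∑ r, P r a * B r s * P s b := by
  simp only [Matrix.mul_apply, Matrix.transpose_apply, Finset.sum_mul]

lemma my_blockConj_entry (k : ℕ) (n : Fin k → ℕ)
    (P : ∀ j, Matrix (Fin (n j + 1)) (Fin (n j + 1)) ℝ)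
    (A : Matrix ((j : Fin k) × Fin (n j + 1)) ((j : Fin k) × Fin (n j + 1)) ℝ)
    (i j : Fin k) (a : Fin (n i + 1)) (b : Fin (n j + 1)) :
    ((blockDiagonal' P)ᵀ * A * blockDiagonal' P) ⟨i, a⟩ ⟨j, b⟩
      = ∑ s, ∑ r, P i r a * A ⟨i, r⟩ ⟨j, s⟩ * P j s b := by
  rw [Matrix.mul_apply]
  rw [← Finset.univ_sigma_univ, Finset.sum_sigma]
  rw [Finset.sum_eq_single j]
  · refine Finset.sum_congr rfl fun s _ => ?_
    rw [blockDiagonal'_apply_eq, Matrix.mul_apply, ← Finset.univ_sigma_univ, Finset.sum_sigma]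
    rw [Finset.sum_eq_single i]
    · rw [Finset.sum_mul]
      refine Finset.sum_congr rfl fun r _ => ?_
      rw [Matrix.transpose_apply, blockDiagonal'_apply_eq]
    · intro i' _ hi'
      refine Finset.sum_eq_zero fun r _ => ?_
      rw [Matrix.transpose_apply, blockDiagonal'_apply_ne _ _ _ hi', zero_mul]
    · intro h; exact absurd (Finset.mem_univ i) h
  · intro j' _ hj'
    refine Finset.sum_eq_zero fun s _ => ?_
    rw [blockDiagonal'_apply_ne _ _ _ hj', mul_zero]
  · intro h; exact absurd (Finset.mem_univ j) h

end Aux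
/-- The energy of a real square matrix: the sum of the absolute values of its
eigenvalues (roots of the characteristic polynomial), with multiplicity. -/
noncomputable def energy {ι : Type*} [Fintype ι] [DecidableEq ι]
    (M : Matrix ι ι ℝ) : ℝ :=
  (M.charpoly.roots.map fun x => |x|).sum

/-- Spectrum and energy of the join of `k` regular graphs. -/
theorem stmt_13 (k : ℕ) (n d : Fin k → ℕ)
    (G : ∀ j, SimpleGraph (Fin (n j + 1))) [∀ j, DecidableRel (G j).Adj]
    (hreg : ∀ j, (G j).IsRegularOfDegree (d j))
    (Ghat : SimpleGraph ((j : Fin k) × Fin (n j + 1))) [DecidableRel Ghat.Adj]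
    (hGhat : ∀ x y : (j : Fin k) × Fin (n j + 1),
      Ghat.Adj x y ↔
        (x.1 ≠ y.1 ∨ ∃ h : x.1 = y.1, (G y.1).Adj (Fin.cast (by rw [h]) x.2) y.2))
    (Bhat : Matrix (Fin k) (Fin k) ℝ)
    (hBhat : ∀ p q : Fin k, Bhat p q =
      if p = q then (d p : ℝ) else Real.sqrt ((n p + 1) * (n q + 1))) :
    (Ghat.adjMatrix ℝ).charpoly.roots
      = (Finset.univ.val.bind fun j : Fin k =>
          (((G j).adjMatrix ℝ).charpoly.roots).erase (d j))
        + Bhat.charpoly.roots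
    ∧ energy (Ghat.adjMatrix ℝ)
      = (∑ j, (energy ((G j).adjMatrix ℝ) - (d j : ℝ))) + energy Bhat := by
  classical
  have hrow : ∀ j (r : Fin (n j + 1)), ∑ s, (G j).adjMatrix ℝ r s = (d j : ℝ) := by
    intro j r
    have h := SimpleGraph.adjMatrix_mulVec_const_apply_of_regular (α := ℝ) (hreg j)
      (v := r) (a := 1)
    simpa [Matrix.mulVec, dotProduct] using h
  have hsymm : ∀ j, ((G j).adjMatrix ℝ)ᵀ = (G j).adjMatrix ℝ :=
    fun j => SimpleGraph.isSymm_adjMatrix _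
  choose P hP1 hP2 hP3 hP4 using fun j =>
    my_exists_P (n j) (d j) ((G j).adjMatrix ℝ) (hsymm j) (hrow j)
  set M : ∀ j, Matrix (Fin (n j + 1)) (Fin (n j + 1)) ℝ :=
    fun j => (P j)ᵀ * (G j).adjMatrix ℝ * P j with hM
  set Cm : ∀ j, Matrix (Fin (n j)) (Fin (n j)) ℝ :=
    fun j => (M j).submatrix Fin.succ Fin.succ with hCm
  have hAj : ∀ j, ((G j).adjMatrix ℝ).charpoly = (X - C (d j : ℝ)) * (Cm j).charpoly := by
    intro j
    rw [← my_charpoly_similar (P j) ((G j).adjMatrix ℝ) (hP1 j)]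
    exact my_charpoly_block _ _ _ (hP3 j) (hP4 j)
  set A := Ghat.adjMatrix ℝ with hA
  set Q := blockDiagonal' P with hQ
  have hQtQ : Qᵀ * Q = 1 := by
    rw [hQ, blockDiagonal'_transpose, ← blockDiagonal'_mul]
    have h1 : (fun j => (P j)ᵀ * P j) = (1 : ∀ j, Matrix (Fin (n j + 1)) (Fin (n j + 1)) ℝ) :=
      funext fun j => hP1 j
    rw [h1, blockDiagonal'_one]
  set N := Qᵀ * A * Q with hN
  have hAdiag : ∀ (i : Fin k) (r s : Fin (n i + 1)), A ⟨i, r⟩ ⟨i, s⟩ = (G i).adjMatrix ℝ r s := by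
    intro i r s
    have hcast : ∀ (p : n i + 1 = n i + 1), Fin.cast p r = r :=
      fun p => Fin.ext (Fin.coe_cast p r)
    have hadj : Ghat.Adj ⟨i, r⟩ ⟨i, s⟩ ↔ (G i).Adj r s := by
      rw [hGhat]
      constructor
      · rintro (h | ⟨h, hadj⟩)
        · exact absurd rfl h
        · rwa [hcast] at hadj
      · intro h
        exact Or.inr ⟨rfl, by rwa [hcast]⟩
    simp [hA, SimpleGraph.adjMatrix_apply, hadj]
  have hAoff : ∀ (i j : Fin k) (r : Fin (n i + 1)) (s : Fin (n j + 1)), i ≠ j →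
      A ⟨i, r⟩ ⟨j, s⟩ = 1 := by
    intro i j r s hij
    have hadj : Ghat.Adj ⟨i, r⟩ ⟨j, s⟩ := (hGhat _ _).mpr (Or.inl hij)
    simp [hA, SimpleGraph.adjMatrix_apply, hadj]
  have hNexp : ∀ (i j : Fin k) (a : Fin (n i + 1)) (b : Fin (n j + 1)),
      N ⟨i, a⟩ ⟨j, b⟩ = ∑ s, ∑ r, P i r a * A ⟨i, r⟩ ⟨j, s⟩ * P j s b :=
    fun i j a b => my_blockConj_entry k n P A i j a b
  have hNdiag : ∀ (i : Fin k) (a b : Fin (n i + 1)), N ⟨i, a⟩ ⟨i, b⟩ = M i a b := by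
    intro i a b
    rw [hNexp]
    refine Eq.trans ?_ (my_conj_entry (P i) ((G i).adjMatrix ℝ) a b).symm
    exact Finset.sum_congr rfl fun s _ => Finset.sum_congr rfl fun r _ => by rw [hAdiag]
  have hNoff : ∀ (i j : Fin k) (a : Fin (n i + 1)) (b : Fin (n j + 1)), i ≠ j →
      N ⟨i, a⟩ ⟨j, b⟩ = (if a = 0 then Real.sqrt (n i + 1) else 0) *
        (if b = 0 then Real.sqrt (n j + 1) else 0) := by
    intro i j a b hij
    rw [hNexp]
    calc ∑ s, ∑ r, P i r a * A ⟨i, r⟩ ⟨j, s⟩ * P j s b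
        = ∑ s, ∑ r, P i r a * P j s b := by
          refine Finset.sum_congr rfl fun s _ => Finset.sum_congr rfl fun r _ => ?_
          rw [hAoff i j r s hij, mul_one]
      _ = ∑ s, (∑ r, P i r a) * P j s b := by
          refine Finset.sum_congr rfl fun s _ => ?_
          rw [Finset.sum_mul]
      _ = (∑ r, P i r a) * (∑ s, P j s b) := by rw [← Finset.mul_sum]
      _ = _ := by rw [hP2 i a, hP2 j b]
  have hM3 : ∀ j (a : Fin (n j + 1)), M j a 0 = if a = 0 then (d j : ℝ) else 0 := hP3
  have hM4 : ∀ j (b : Fin (n j + 1)), M j 0 b = if b = 0 then (d j : ℝ) else 0 := hP4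
  set E := myGlobalEquiv k n with hE
  have hre : reindex E E N = fromBlocks Bhat 0 0 (blockDiagonal' Cm) := by
    refine Matrix.ext fun x y => ?_
    rcases x with i | ⟨i, a⟩ <;> rcases y with j | ⟨j, b⟩
    · show N ⟨i, 0⟩ ⟨j, 0⟩ = Bhat i j
      rcases eq_or_ne i j with rfl | hij
      · rw [hNdiag, hM3 i 0, hBhat]
        simp
      · rw [hNoff i j 0 0 hij, hBhat, if_neg hij, if_pos rfl, if_pos rfl,
          ← Real.sqrt_mul (by positivity)]
    · show N ⟨i, 0⟩ ⟨j, b.succ⟩ = 0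
      rcases eq_or_ne i j with rfl | hij
      · rw [hNdiag, hM4 i b.succ, if_neg (Fin.succ_ne_zero b)]
      · rw [hNoff i j 0 b.succ hij, if_neg (Fin.succ_ne_zero b), mul_zero]
    · show N ⟨i, a.succ⟩ ⟨j, 0⟩ = 0
      rcases eq_or_ne i j with rfl | hij
      · rw [hNdiag, hM3 i a.succ, if_neg (Fin.succ_ne_zero a)]
      · rw [hNoff i j a.succ 0 hij, if_neg (Fin.succ_ne_zero a), zero_mul]
    · show N ⟨i, a.succ⟩ ⟨j, b.succ⟩ = blockDiagonal' Cm ⟨i, a⟩ ⟨j, b⟩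
      rcases eq_or_ne i j with rfl | hij
      · rw [hNdiag, blockDiagonal'_apply_eq]
        rfl
      · rw [hNoff i j a.succ b.succ hij, if_neg (Fin.succ_ne_zero a), zero_mul,
          blockDiagonal'_apply_ne _ _ _ hij]
  have hsim : N.charpoly = A.charpoly := my_charpoly_similar Q A hQtQ
  have hcharA : A.charpoly = Bhat.charpoly * ∏ j, (Cm j).charpoly := by
    rw [← hsim, ← Matrix.charpoly_reindex E N, hre, Matrix.charpoly_fromBlocks_zero₂₁,
      my_charpoly_blockDiagonal']
  have hBne : Bhat.charpoly ≠ 0 := (Matrix.charpoly_monic _).ne_zero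
  have hCne : ∀ j, (Cm j).charpoly ≠ 0 := fun j => (Matrix.charpoly_monic _).ne_zero
  have hprodne : (∏ j, (Cm j).charpoly) ≠ 0 :=
    Finset.prod_ne_zero_iff.mpr fun j _ => hCne j
  have hrootsA : A.charpoly.roots
      = Bhat.charpoly.roots + Finset.univ.val.bind fun j => (Cm j).charpoly.roots := by
    rw [hcharA, Polynomial.roots_mul (mul_ne_zero hBne hprodne),
      Polynomial.roots_prod _ _ hprodne]
  have hAjroots : ∀ j, ((G j).adjMatrix ℝ).charpoly.roots
      = ((d j : ℝ)) ::ₘ (Cm j).charpoly.roots := by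
    intro j
    rw [hAj j, Polynomial.roots_mul (mul_ne_zero (Polynomial.X_sub_C_ne_zero _) (hCne j)),
      Polynomial.roots_X_sub_C, Multiset.singleton_add]
  have herase : ∀ j, (((G j).adjMatrix ℝ).charpoly.roots).erase ((d j : ℝ))
      = (Cm j).charpoly.roots := by
    intro j
    rw [hAjroots j, Multiset.erase_cons_head]
  have hbind : (Finset.univ.val.bind fun j : Fin k =>
        (((G j).adjMatrix ℝ).charpoly.roots).erase ((d j : ℝ)))
      = Finset.univ.val.bind fun j => (Cm j).charpoly.roots :=
    Multiset.bind_congr fun j _ => herase j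
  refine ⟨?_, ?_⟩
  · rw [hrootsA, hbind, add_comm]
  · have hEj : ∀ j, energy ((G j).adjMatrix ℝ) - (d j : ℝ)
        = (((Cm j).charpoly.roots).map fun x => |x|).sum := by
      intro j
      rw [energy, hAjroots j, Multiset.map_cons, Multiset.sum_cons,
        abs_of_nonneg (Nat.cast_nonneg (d j))]
      ring
    rw [energy, hrootsA, Multiset.map_add, Multiset.sum_add, Multiset.map_bind,
      Multiset.sum_bind]
    rw [Finset.sum_congr rfl fun j _ => hEj j]
    rw [add_comm, energy]
    congr 1
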